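/- arXiv:2306.15235 — 3 statements merged into one kernel-verified Lean document; each statement's English description precedes it below -/
import Mathlib

section
/- For every a > 0 and every λ > 0, ∫_0^∞ e^{−λt} m_a(t) dt = 2(√(λ + a²) − a)/λ. -/
open MeasureTheory

/-- `f_β^α` with `β = 1/2`: `f_{1/2}^α(t) = e^{-αt} t^{-1/2} / √π`. -/
noncomputable def fHalf (α t : ℝ) : ℝ :=
  Real.exp (-α * t) * t ^ (-(1 : ℝ) / 2) / Real.sqrt Real.pi

/-- The kernel `m_a(t) = 2 ( f_{1/2}^{a²}(t) + a² ∫_0^t f_{1/2}^{a²}(s) ds − a )`. -/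
noncomputable def mKer (a t : ℝ) : ℝ :=
  2 * (fHalf (a ^ 2) t + a ^ 2 * (∫ s in (0 : ℝ)..t, fHalf (a ^ 2) s) - a)

section Aux

open Set Real Filter Topology

theorem fHalf_nonpos (c t : ℝ) (ht : t ≤ 0) : fHalf c t = 0 := by
  unfold fHalf
  rcases lt_or_eq_of_le ht with h | h
  · rw [Real.rpow_def_of_neg h]
    have : Real.cos (-(1:ℝ)/2 * Real.pi) = 0 := by
      rw [show (-(1:ℝ)/2 * Real.pi) = -(Real.pi/2) by ring, Real.cos_neg, Real.cos_pi_div_two]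
    rw [this]; ring
  · subst h; rw [Real.zero_rpow (by norm_num)]; simp

theorem fHalf_nonneg (c t : ℝ) : 0 ≤ fHalf c t := by
  rcases le_or_gt t 0 with h | h
  · rw [fHalf_nonpos c t h]
  · unfold fHalf; positivity

theorem fHalf_integrableOn (c : ℝ) (hc : 0 < c) : IntegrableOn (fHalf c) (Ioi 0) := by
  have h := integrableOn_rpow_mul_exp_neg_mul_rpow (p := 1) (s := -(1:ℝ)/2) (b := c) (by norm_num) one_pos hc
  simp_rw [Real.rpow_one] at h
  have h2 := h.mul_const (Real.sqrt Real.pi)⁻¹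
  have : fHalf c = fun t : ℝ => t ^ (-(1:ℝ)/2) * Real.exp (-c * t) * (Real.sqrt Real.pi)⁻¹ := by
    funext t; unfold fHalf; ring
  rw [this]; exact h2

theorem fHalf_integral (c : ℝ) (hc : 0 < c) : ∫ t in Ioi (0:ℝ), fHalf c t = (Real.sqrt c)⁻¹ := by
  have e : ∫ t in Ioi (0:ℝ), fHalf c t
      = (∫ t in Ioi (0:ℝ), t ^ ((1:ℝ)/2 - 1) * Real.exp (-(c * t))) * (Real.sqrt Real.pi)⁻¹ := by
    rw [← integral_mul_const]
    refine setIntegral_congr_fun measurableSet_Ioi (fun t ht => ?_)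
    unfold fHalf
    rw [show (1:ℝ)/2 - 1 = -(1:ℝ)/2 by norm_num, show -(c*t) = -c*t by ring]
    ring
  rw [e, integral_rpow_mul_exp_neg_mul_Ioi (by norm_num) hc, Real.Gamma_one_half_eq,
    ← Real.sqrt_eq_rpow, mul_assoc, mul_inv_cancel₀ (by positivity), mul_one, one_div, Real.sqrt_inv]

theorem fHalf_integrable (c : ℝ) (hc : 0 < c) : Integrable (fHalf c) := by
  have h : fHalf c = Set.indicator (Ioi 0) (fHalf c) := by
    funext t
    by_cases ht : t ∈ Ioi (0:ℝ)
    · rw [Set.indicator_of_mem ht]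
    · rw [Set.indicator_of_notMem ht, fHalf_nonpos c t (by simpa using ht)]
  rw [h]
  exact (integrable_indicator_iff measurableSet_Ioi).2 (fHalf_integrableOn c hc)

theorem fHalf_continuousOn (c : ℝ) : ContinuousOn (fHalf c) (Ioi 0) := by
  unfold fHalf
  apply ContinuousOn.div_const
  apply ContinuousOn.mul (Continuous.continuousOn (by continuity))
  intro t ht
  exact (Real.continuousAt_rpow_const t _ (Or.inl (ne_of_gt ht))).continuousWithinAt

theorem primitive_le (c : ℝ) (hc : 0 < c) (t : ℝ) :
    (∫ s in (0:ℝ)..t, fHalf c s) ≤ (Real.sqrt c)⁻¹ := by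
  have hnn : (0:ℝ) ≤ (Real.sqrt c)⁻¹ := by positivity
  rcases le_or_gt t 0 with h | h
  · rw [intervalIntegral.integral_of_ge h]
    have : 0 ≤ ∫ s in Ioc t 0, fHalf c s := setIntegral_nonneg measurableSet_Ioc (fun s _ => fHalf_nonneg c s)
    linarith
  · rw [intervalIntegral.integral_of_le h.le, ← fHalf_integral c hc]
    apply setIntegral_mono_set (fHalf_integrableOn c hc)
    · exact Eventually.of_forall (fun s => fHalf_nonneg c s)
    · exact Eventually.of_forall Ioc_subset_Ioi_self

theorem primitive_nonneg (c : ℝ) (t : ℝ) (ht : 0 ≤ t) : 0 ≤ ∫ s in (0:ℝ)..t, fHalf c s :=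
  intervalIntegral.integral_nonneg ht (fun s _ => fHalf_nonneg c s)

theorem primitive_continuous (c : ℝ) (hc : 0 < c) :
    Continuous (fun t => ∫ s in (0:ℝ)..t, fHalf c s) :=
  (fHalf_integrable c hc).continuous_primitive 0

theorem primitive_hasDerivAt (c : ℝ) (hc : 0 < c) (t : ℝ) (ht : 0 < t) :
    HasDerivAt (fun u => ∫ s in (0:ℝ)..u, fHalf c s) (fHalf c t) t := by
  apply intervalIntegral.integral_hasDerivAt_right
    ((fHalf_integrable c hc).intervalIntegrable)
    ((fHalf_continuousOn c).stronglyMeasurableAtFilter isOpen_Ioi _ ht)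
  exact ((fHalf_continuousOn c).continuousAt (Ioi_mem_nhds ht))

theorem exp_mul_fHalf (l c : ℝ) :
    (fun t => Real.exp (-l * t) * fHalf c t) = fHalf (l + c) := by
  funext t
  unfold fHalf
  rw [mul_div_assoc', ← mul_assoc, ← Real.exp_add]
  ring_nf

theorem tendsto_exp_neg_mul (l : ℝ) (hl : 0 < l) :
    Tendsto (fun t : ℝ => Real.exp (-l * t)) atTop (𝓝 0) := by
  have h1 : Tendsto (fun t : ℝ => l * t) atTop atTop :=
    Tendsto.const_mul_atTop hl tendsto_id
  have := Real.tendsto_exp_neg_atTop_nhds_zero.comp h1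
  refine this.congr (fun t => ?_)
  simp [Function.comp, neg_mul]

theorem integral_exp_neg_mul (l : ℝ) (hl : 0 < l) :
    ∫ t in Ioi (0:ℝ), Real.exp (-l * t) = l⁻¹ := by
  have key := integral_Ioi_of_hasDerivAt_of_tendsto (a := 0) (m := 0)
    (f := fun t => -(l⁻¹) * Real.exp (-l * t))
    (f' := fun t => Real.exp (-l * t)) ?_ ?_ ?_ ?_
  · rw [key]; simp
  · exact (Continuous.continuousWithinAt (by continuity))
  · intro t _
    have h0 : HasDerivAt (fun y : ℝ => -l * y) (-l) t := by
      simpa using (hasDerivAt_id t).const_mul (-l)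
    have hE : HasDerivAt (fun t : ℝ => Real.exp (-l * t)) (Real.exp (-l*t) * -l) t :=
      (Real.hasDerivAt_exp (-l*t)).comp t h0
    have := hE.const_mul (-(l⁻¹))
    refine this.congr_deriv ?_
    field_simp
  · exact exp_neg_integrableOn_Ioi 0 hl
  · have := (tendsto_exp_neg_mul l hl).const_mul (-(l⁻¹))
    simpa using this

theorem exp_primitive_integrableOn (c l : ℝ) (hc : 0 < c) (hl : 0 < l) :
    IntegrableOn (fun t => Real.exp (-l * t) * (∫ s in (0:ℝ)..t, fHalf c s)) (Ioi 0) := by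
  apply Integrable.mono' ((exp_neg_integrableOn_Ioi 0 hl).const_mul (Real.sqrt c)⁻¹)
  · exact (Continuous.mul (by continuity) (primitive_continuous c hc)).aestronglyMeasurable
  · filter_upwards [self_mem_ae_restrict measurableSet_Ioi] with t ht
    rw [Real.norm_eq_abs, abs_of_nonneg
      (mul_nonneg (Real.exp_pos _).le (primitive_nonneg c t (le_of_lt ht)))]
    rw [mul_comm ((Real.sqrt c)⁻¹)]
    exact mul_le_mul_of_nonneg_left (primitive_le c hc t) (Real.exp_pos _).le

theorem laplace_primitive (c l : ℝ) (hc : 0 < c) (hl : 0 < l) :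
    ∫ t in Ioi (0:ℝ), Real.exp (-l * t) * (∫ s in (0:ℝ)..t, fHalf c s)
      = l⁻¹ * ∫ t in Ioi (0:ℝ), Real.exp (-l * t) * fHalf c t := by
  set F : ℝ → ℝ := fun t => ∫ s in (0:ℝ)..t, fHalf c s with hF
  have h2 : IntegrableOn (fun t => Real.exp (-l * t) * fHalf c t) (Ioi 0) := by
    rw [exp_mul_fHalf]; exact fHalf_integrableOn _ (by linarith)
  have h1 : IntegrableOn (fun t => Real.exp (-l * t) * F t) (Ioi 0) :=
    exp_primitive_integrableOn c l hc hl
  have key := integral_Ioi_of_hasDerivAt_of_tendsto (a := 0) (m := 0)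
    (f := fun t => -(l⁻¹) * (Real.exp (-l * t) * F t))
    (f' := fun t => Real.exp (-l * t) * F t - l⁻¹ * (Real.exp (-l * t) * fHalf c t)) ?_ ?_ ?_ ?_
  · rw [integral_sub h1 (h2.const_mul _)] at key
    rw [integral_const_mul] at key
    have hF0 : F 0 = 0 := intervalIntegral.integral_same
    rw [hF0, show (0:ℝ) - -l⁻¹ * (Real.exp (-l*0) * 0) = 0 by ring] at key
    linarith
  · exact (Continuous.continuousWithinAt (by
      exact ((continuous_const.mul ((by continuity : Continuous fun t : ℝ => Real.exp (-l*t)).mul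
        (primitive_continuous c hc))))))
  · intro t ht
    have h0 : HasDerivAt (fun y : ℝ => -l * y) (-l) t := by
      simpa using (hasDerivAt_id t).const_mul (-l)
    have hE : HasDerivAt (fun t : ℝ => Real.exp (-l * t)) (Real.exp (-l*t) * -l) t :=
      (Real.hasDerivAt_exp (-l*t)).comp t h0
    have hFd := primitive_hasDerivAt c hc t ht
    have := (hE.mul hFd).const_mul (-(l⁻¹))
    refine this.congr_deriv ?_
    field_simp
    ring
  · exact h1.sub (h2.const_mul _)
  · have hb : Tendsto (fun t : ℝ => -(l⁻¹ * (Real.sqrt c)⁻¹) * Real.exp (-l * t)) atTop (𝓝 0) := by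
      simpa using (tendsto_exp_neg_mul l hl).const_mul (-(l⁻¹ * (Real.sqrt c)⁻¹))
    apply tendsto_of_tendsto_of_tendsto_of_le_of_le' hb tendsto_const_nhds
    · filter_upwards [eventually_ge_atTop (0:ℝ)] with t ht
      have h1' : F t ≤ (Real.sqrt c)⁻¹ := primitive_le c hc t
      have h2' : 0 ≤ Real.exp (-l*t) := (Real.exp_pos _).le
      have h3 : Real.exp (-l*t) * F t ≤ Real.exp (-l*t) * (Real.sqrt c)⁻¹ :=
        mul_le_mul_of_nonneg_left h1' h2'
      have hli : 0 < l⁻¹ := by positivity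
      nlinarith
    · filter_upwards [eventually_ge_atTop (0:ℝ)] with t ht
      have := mul_nonneg (Real.exp_pos (-l*t)).le (primitive_nonneg c t ht)
      have hli : 0 ≤ l⁻¹ := by positivity
      nlinarith

end Aux

/-- For `a > 0` and `λ > 0`,
`∫_0^∞ e^{−λt} m_a(t) dt = 2(√(λ + a²) − a)/λ`. -/
theorem stmt1 (a l : ℝ) (ha : 0 < a) (hl : 0 < l) :
    (∫ t in Set.Ioi (0 : ℝ), Real.exp (-l * t) * mKer a t) =
      2 * (Real.sqrt (l + a ^ 2) - a) / l := by
  have hc : (0:ℝ) < a ^ 2 := by positivity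
  have hc' : (0:ℝ) < l + a ^ 2 := by positivity
  have hA : IntegrableOn (fun t => Real.exp (-l * t) * fHalf (a ^ 2) t) (Set.Ioi 0) := by
    rw [exp_mul_fHalf]; exact fHalf_integrableOn _ hc'
  have hB : IntegrableOn
      (fun t => Real.exp (-l * t) * (∫ s in (0:ℝ)..t, fHalf (a ^ 2) s)) (Set.Ioi 0) :=
    exp_primitive_integrableOn _ l hc hl
  have hC : IntegrableOn (fun t : ℝ => Real.exp (-l * t)) (Set.Ioi 0) :=
    exp_neg_integrableOn_Ioi 0 hl
  have hEq : ∀ t ∈ Set.Ioi (0:ℝ), Real.exp (-l * t) * mKer a t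
      = (2 * (Real.exp (-l * t) * fHalf (a ^ 2) t)
          + (2 * a ^ 2) * (Real.exp (-l * t) * (∫ s in (0:ℝ)..t, fHalf (a ^ 2) s)))
        - (2 * a) * Real.exp (-l * t) := by
    intro t _
    unfold mKer
    ring
  have hA2 : IntegrableOn (fun t => 2 * (Real.exp (-l * t) * fHalf (a ^ 2) t)) (Set.Ioi 0) :=
    hA.const_mul 2
  have hB2 : IntegrableOn (fun t => (2 * a ^ 2) *
      (Real.exp (-l * t) * (∫ s in (0:ℝ)..t, fHalf (a ^ 2) s))) (Set.Ioi 0) :=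
    hB.const_mul (2 * a ^ 2)
  have hC2 : IntegrableOn (fun t : ℝ => (2 * a) * Real.exp (-l * t)) (Set.Ioi 0) :=
    hC.const_mul (2 * a)
  have hAB : IntegrableOn (fun t => 2 * (Real.exp (-l * t) * fHalf (a ^ 2) t)
      + (2 * a ^ 2) * (Real.exp (-l * t) * (∫ s in (0:ℝ)..t, fHalf (a ^ 2) s))) (Set.Ioi 0) :=
    hA2.add hB2
  rw [setIntegral_congr_fun measurableSet_Ioi hEq]
  rw [integral_sub hAB hC2, integral_add hA2 hB2,
    integral_const_mul, integral_const_mul, integral_const_mul,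
    laplace_primitive _ _ hc hl, integral_exp_neg_mul l hl,
    show (fun t => Real.exp (-l * t) * fHalf (a ^ 2) t) = fHalf (l + a ^ 2) from
      exp_mul_fHalf l (a ^ 2),
    fHalf_integral _ hc']
  have hS : Real.sqrt (l + a ^ 2) * Real.sqrt (l + a ^ 2) = l + a ^ 2 :=
    Real.mul_self_sqrt hc'.le
  have hS0 : 0 < Real.sqrt (l + a ^ 2) := Real.sqrt_pos.2 hc'
  field_simp
  linear_combination (-1 : ℝ) * hS
end

section
/- For every a > 0 and every t > 0: m_a(t)/2 = f_{1/2}^{a²}(t) − a·erfc(a√t) = e^{−a²t} q^a(t); consequently erfc(a√t) = 1 − a ∫_0^t f_{1/2}^{a²}(s) ds, m_a(t) ≤ 2 f_{1/2}^{a²}(t), and q^a(t) > 0 for all t > 0. -/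
open MeasureTheory

/-- The complementary error function `erfc(s) = (2/√π) ∫_s^∞ e^{−τ²} dτ`. -/
noncomputable def erfc (s : ℝ) : ℝ :=
  (2 / Real.sqrt Real.pi) * ∫ τ in Set.Ioi s, Real.exp (-τ ^ 2)

/-- `q^μ(t) = t^{-1/2}/√π − μ e^{μ²t} erfc(μ√t)` (note `f_{1/2}^0(t) = t^{-1/2}/√π`). -/
noncomputable def qFun (μ t : ℝ) : ℝ :=
  t ^ (-(1 : ℝ) / 2) / Real.sqrt Real.pi - μ * Real.exp (μ ^ 2 * t) * erfc (μ * Real.sqrt t)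

lemma gauss_intOn (s : ℝ) : IntegrableOn (fun τ : ℝ => Real.exp (-τ ^ 2)) (Set.Ioi s) := by
  have := (integrable_exp_neg_mul_sq (one_pos)).integrableOn (s := Set.Ioi s)
  simpa using this

lemma rpow_neg_half_eq {x : ℝ} (hx : 0 < x) : x ^ (-(1 : ℝ) / 2) = (Real.sqrt x)⁻¹ := by
  rw [neg_div, Real.rpow_neg hx.le, Real.sqrt_eq_rpow]

lemma erfc_split {s : ℝ} (hs : 0 ≤ s) :
    erfc s = 1 - (2 / Real.sqrt Real.pi) * ∫ τ in (0 : ℝ)..s, Real.exp (-τ ^ 2) := by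
  have hgauss : (∫ τ in Set.Ioi (0:ℝ), Real.exp (-τ ^ 2)) = Real.sqrt Real.pi / 2 := by
    have := integral_gaussian_Ioi 1
    simpa using this
  have hsplit : (∫ τ in Set.Ioc (0:ℝ) s, Real.exp (-τ ^ 2)) +
      (∫ τ in Set.Ioi s, Real.exp (-τ ^ 2)) = ∫ τ in Set.Ioi (0:ℝ), Real.exp (-τ ^ 2) := by
    rw [← setIntegral_union (Set.Ioc_disjoint_Ioi le_rfl) measurableSet_Ioi
      ((gauss_intOn 0).mono_set Set.Ioc_subset_Ioi_self) (gauss_intOn s),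
      Set.Ioc_union_Ioi_eq_Ioi hs]
  have hInt : (∫ τ in (0 : ℝ)..s, Real.exp (-τ ^ 2)) = ∫ τ in Set.Ioc (0:ℝ) s, Real.exp (-τ ^ 2) :=
    intervalIntegral.integral_of_le hs
  have hpi : Real.sqrt Real.pi ≠ 0 := by positivity
  rw [erfc, hInt]
  have : (∫ τ in Set.Ioi s, Real.exp (-τ ^ 2)) =
      Real.sqrt Real.pi / 2 - ∫ τ in Set.Ioc (0:ℝ) s, Real.exp (-τ ^ 2) := by
    rw [← hgauss, ← hsplit]; ring
  rw [this]
  field_simp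

lemma subst_lemma {a t : ℝ} (ha : 0 < a) (ht : 0 < t) :
    (∫ s in (0 : ℝ)..t, fHalf (a ^ 2) s) =
      (2 / (a * Real.sqrt Real.pi)) * ∫ τ in (0 : ℝ)..(a * Real.sqrt t), Real.exp (-τ ^ 2) := by
  set f : ℝ → ℝ := fun s => a * Real.sqrt s with hf_def
  set f' : ℝ → ℝ := fun s => a / (2 * Real.sqrt s) with hf'_def
  set g : ℝ → ℝ := fun τ => (2 / (a * Real.sqrt Real.pi)) * Real.exp (-τ ^ 2) with hg_def
  have hπ : (0:ℝ) < Real.sqrt Real.pi := Real.sqrt_pos.mpr Real.pi_pos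
  have hfc : ContinuousOn f (Set.uIcc 0 t) :=
    (continuous_const.mul Real.continuous_sqrt).continuousOn
  have hgc : Continuous g := continuous_const.mul (Real.continuous_exp.comp (by continuity))
  have hff' : ∀ x ∈ Set.Ioo (min (0:ℝ) t) (max 0 t), HasDerivWithinAt f (f' x) (Set.Ioi x) x := by
    intro x hx
    rw [min_eq_left ht.le, max_eq_right ht.le] at hx
    have hx0 : x ≠ 0 := ne_of_gt hx.1
    have h := (Real.hasDerivAt_sqrt hx0).const_mul a
    have : a * (1 / (2 * Real.sqrt x)) = f' x := by rw [hf'_def]; ring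
    rw [this] at h
    exact h.hasDerivWithinAt
  have key' := intervalIntegral.integral_comp_smul_deriv''' (a := (0:ℝ)) (b := t)
      (f := f) (f' := f') (g := g) hfc hff'
      (hgc.continuousOn)
      (hgc.continuousOn.integrableOn_compact (isCompact_uIcc.image_of_continuousOn hfc))
      ?_
  · have key : (∫ x in (0:ℝ)..t, f' x • g (f x)) = ∫ u in (f 0)..(f t), g u := by
      simpa [Function.comp] using key'
    have hfi : ∀ x ∈ Set.uIcc (0:ℝ) t, f' x • g (f x) = fHalf (a ^ 2) x := by
      intro x hx
      rw [Set.uIcc_of_le ht.le] at hx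
      rcases eq_or_lt_of_le hx.1 with h0 | h0
      · simp [← h0, hf'_def, hg_def, fHalf, Real.zero_rpow (by norm_num : (-(1:ℝ)/2) ≠ 0)]
      · have hsx : 0 < Real.sqrt x := Real.sqrt_pos.mpr h0
        have hsq : (a * Real.sqrt x) ^ 2 = a ^ 2 * x := by
          rw [mul_pow, Real.sq_sqrt h0.le]
        simp only [hf'_def, hg_def, hf_def, smul_eq_mul, fHalf, hsq]
        rw [rpow_neg_half_eq h0]
        rw [neg_mul]
        field_simp
    have hL : (∫ x in (0:ℝ)..t, f' x • g (f x)) = ∫ s in (0:ℝ)..t, fHalf (a ^ 2) s :=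
      intervalIntegral.integral_congr hfi
    have hf0 : f 0 = 0 := by simp [hf_def]
    have hft : f t = a * Real.sqrt t := rfl
    rw [hL, hf0, hft] at key
    rw [key, hg_def, intervalIntegral.integral_const_mul]
  · -- integrability of x ↦ f' x • g (f x) on [[0,t]]
    have h1 : IntervalIntegrable (fun x : ℝ => x ^ (-(1:ℝ)/2)) volume 0 t :=
      intervalIntegral.intervalIntegrable_rpow' (by norm_num)
    have h2 : IntervalIntegrable
        (fun x : ℝ => x ^ (-(1:ℝ)/2) * (Real.exp (-(a^2) * x) / Real.sqrt Real.pi)) volume 0 t := by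
      apply h1.mul_continuousOn
      exact ((Real.continuous_exp.comp (by continuity)).div_const _).continuousOn
    rw [intervalIntegrable_iff'] at h2
    apply h2.congr_fun _ measurableSet_uIcc
    intro x hx
    rw [Set.uIcc_of_le ht.le] at hx
    rcases eq_or_lt_of_le hx.1 with h0 | h0
    · simp [← h0, hf'_def, hg_def, Real.zero_rpow (by norm_num : (-(1:ℝ)/2) ≠ 0)]
    · have hsx : 0 < Real.sqrt x := Real.sqrt_pos.mpr h0
      have hsq : (a * Real.sqrt x) ^ 2 = a ^ 2 * x := by
        rw [mul_pow, Real.sq_sqrt h0.le]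
      simp only [Function.comp_def, hf'_def, hg_def, hf_def, smul_eq_mul, hsq, neg_mul]
      rw [rpow_neg_half_eq h0]
      field_simp

lemma erfc_nonneg (s : ℝ) : 0 ≤ erfc s := by
  apply mul_nonneg (by positivity)
  exact setIntegral_nonneg measurableSet_Ioi fun τ _ => (Real.exp_pos _).le

lemma x_gauss_int : Integrable (fun x : ℝ => x * Real.exp (-x ^ 2)) := by
  have := integrable_rpow_mul_exp_neg_mul_sq (one_pos) (s := 1) (by norm_num)
  simpa [Real.rpow_one] using this

lemma int_x_gauss (s : ℝ) :
    (∫ τ in Set.Ioi s, τ * Real.exp (-τ ^ 2)) = Real.exp (-s ^ 2) / 2 := by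
  have hderiv : ∀ x ∈ Set.Ioi s, HasDerivAt (fun τ : ℝ => -(Real.exp (-τ ^ 2) / 2))
      (x * Real.exp (-x ^ 2)) x := by
    intro x _
    have h1 : HasDerivAt (fun τ : ℝ => -τ ^ 2) (-(2 * x)) x := by
      simpa using (hasDerivAt_pow 2 x).fun_neg
    have h2 := (Real.hasDerivAt_exp (-x ^ 2)).comp x h1
    have h3 := (h2.div_const 2).fun_neg
    refine h3.congr_deriv ?_
    ring
  have htend : Filter.Tendsto (fun τ : ℝ => -(Real.exp (-τ ^ 2) / 2)) Filter.atTop (nhds 0) := by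
    have hτ : Filter.Tendsto (fun τ : ℝ => -τ ^ 2) Filter.atTop Filter.atBot := by
      rw [Filter.tendsto_neg_atBot_iff]
      exact Filter.tendsto_pow_atTop two_ne_zero
    have := Real.tendsto_exp_atBot.comp hτ
    have h2 := (this.div_const 2).neg
    simpa using h2
  have hint : IntegrableOn (fun x : ℝ => x * Real.exp (-x ^ 2)) (Set.Ioi s) :=
    x_gauss_int.integrableOn
  have := integral_Ioi_of_hasDerivAt_of_tendsto
    ((by continuity : Continuous fun τ : ℝ => -(Real.exp (-τ ^ 2) / 2)).continuousWithinAt)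
    hderiv hint htend
  rw [this]; ring

lemma erfc_lt {s : ℝ} (hs : 0 < s) : erfc s < Real.exp (-s ^ 2) / (s * Real.sqrt Real.pi) := by
  have hπ : (0:ℝ) < Real.sqrt Real.pi := Real.sqrt_pos.mpr Real.pi_pos
  have hpos : (0:ℝ) < ∫ τ in Set.Ioi s, (τ - s) * Real.exp (-τ ^ 2) := by
    rw [setIntegral_pos_iff_support_of_nonneg_ae]
    · refine lt_of_lt_of_le ?_ (measure_mono (Set.subset_inter (fun τ hτ => ?_) Set.Subset.rfl))
      · rw [Real.volume_Ioi]; exact ENNReal.zero_lt_top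
      · have : (0:ℝ) < (τ - s) * Real.exp (-τ ^ 2) :=
          mul_pos (sub_pos.mpr hτ) (Real.exp_pos _)
        exact Function.mem_support.mpr (ne_of_gt this)
    · refine (ae_restrict_iff' measurableSet_Ioi).mpr (Filter.Eventually.of_forall fun τ hτ => ?_)
      exact mul_nonneg (sub_nonneg.mpr (le_of_lt hτ)) (Real.exp_pos _).le
    · have : IntegrableOn (fun τ : ℝ => τ * Real.exp (-τ ^ 2) - s * Real.exp (-τ ^ 2))
          (Set.Ioi s) := x_gauss_int.integrableOn.sub ((gauss_intOn s).const_mul s)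
      simpa [sub_mul] using this
  have hsub : (∫ τ in Set.Ioi s, (τ - s) * Real.exp (-τ ^ 2)) =
      (∫ τ in Set.Ioi s, τ * Real.exp (-τ ^ 2)) - s * ∫ τ in Set.Ioi s, Real.exp (-τ ^ 2) := by
    rw [← integral_const_mul, ← integral_sub x_gauss_int.integrableOn
      ((gauss_intOn s).const_mul s)]
    congr 1; funext τ; ring
  rw [hsub, int_x_gauss] at hpos
  have h1 : (∫ τ in Set.Ioi s, Real.exp (-τ ^ 2)) < Real.exp (-s ^ 2) / (2 * s) := by
    rw [lt_div_iff₀ (by positivity)]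
    nlinarith
  calc erfc s < (2 / Real.sqrt Real.pi) * (Real.exp (-s ^ 2) / (2 * s)) := by
        exact mul_lt_mul_of_pos_left h1 (by positivity)
    _ = Real.exp (-s ^ 2) / (s * Real.sqrt Real.pi) := by field_simp

/-- For `a > 0`, `t > 0`:
`m_a(t)/2 = f_{1/2}^{a²}(t) − a·erfc(a√t) = e^{−a²t} q^a(t)`, hence
`erfc(a√t) = 1 − a ∫_0^t f_{1/2}^{a²}`, `m_a(t) ≤ 2 f_{1/2}^{a²}(t)`, and `q^a(t) > 0`. -/
theorem stmt5 (a : ℝ) (ha : 0 < a) : ∀ t > (0 : ℝ),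
    mKer a t / 2 = fHalf (a ^ 2) t - a * erfc (a * Real.sqrt t) ∧
    mKer a t / 2 = Real.exp (-a ^ 2 * t) * qFun a t ∧
    erfc (a * Real.sqrt t) = 1 - a * ∫ s in (0 : ℝ)..t, fHalf (a ^ 2) s ∧
    mKer a t ≤ 2 * fHalf (a ^ 2) t ∧
    0 < qFun a t := by
  intro t ht
  have hπ : (0:ℝ) < Real.sqrt Real.pi := Real.sqrt_pos.mpr Real.pi_pos
  have hst : 0 < Real.sqrt t := Real.sqrt_pos.mpr ht
  have hK : a * (∫ s in (0:ℝ)..t, fHalf (a ^ 2) s) = 1 - erfc (a * Real.sqrt t) := by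
    rw [subst_lemma ha ht, erfc_split (by positivity : (0:ℝ) ≤ a * Real.sqrt t)]
    field_simp
    ring
  have e1 : mKer a t / 2 = fHalf (a ^ 2) t - a * erfc (a * Real.sqrt t) := by
    have h : a ^ 2 * (∫ s in (0:ℝ)..t, fHalf (a ^ 2) s) =
        a * (a * ∫ s in (0:ℝ)..t, fHalf (a ^ 2) s) := by ring
    rw [mKer, h, hK]; ring
  have e2 : mKer a t / 2 = Real.exp (-a ^ 2 * t) * qFun a t := by
    rw [e1, qFun, mul_sub, fHalf]
    congr 1
    · ring
    · rw [show Real.exp (-a ^ 2 * t) * (a * Real.exp (a ^ 2 * t) * erfc (a * Real.sqrt t)) =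
          a * Real.exp (-a ^ 2 * t + a ^ 2 * t) * erfc (a * Real.sqrt t) from by
        rw [Real.exp_add]; ring]
      simp
  have e3 : erfc (a * Real.sqrt t) = 1 - a * ∫ s in (0:ℝ)..t, fHalf (a ^ 2) s := by
    linarith
  have e4 : mKer a t ≤ 2 * fHalf (a ^ 2) t := by
    have := mul_nonneg ha.le (erfc_nonneg (a * Real.sqrt t))
    linarith
  have e5 : 0 < qFun a t := by
    have hlt := erfc_lt (mul_pos ha hst)
    have h2 : a * (Real.exp (-(a * Real.sqrt t) ^ 2) / ((a * Real.sqrt t) * Real.sqrt Real.pi)) =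
        fHalf (a ^ 2) t := by
      rw [fHalf, rpow_neg_half_eq ht,
        show (a * Real.sqrt t) ^ 2 = a ^ 2 * t from by rw [mul_pow, Real.sq_sqrt ht.le], neg_mul]
      field_simp
    have h1 : a * erfc (a * Real.sqrt t) < fHalf (a ^ 2) t := by
      rw [← h2]
      exact mul_lt_mul_of_pos_left hlt ha
    have h3 : 0 < Real.exp (-a ^ 2 * t) * qFun a t := by rw [← e2, e1]; linarith
    nlinarith [Real.exp_pos (-a ^ 2 * t)]
  exact ⟨e1, e2, e3, e4, e5⟩
end

section
/- Let a ≥ 0, b > 0, λ > 0, c ∈ ℝ. Suppose W : ℝ → ℝ is bounded and continuous, twice continuously differentiable on ℝ ∖ {0}, satisfies −W''(x) + (λ + a²)W(x) = −c e^{−a|x|} for all x ≠ 0, its one-sided derivatives W'(0⁺) and W'(0⁻) exist, and W'(0⁺) − W'(0⁻) = 2b(W(0) + 1/λ). Then W(0) = (ca + bc − b)/(λ(√(λ + a²) + b)) − c/λ. -/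
open MeasureTheory Set

lemma expDeriv (μ x : ℝ) : HasDerivAt (fun y => Real.exp (μ*y)) (μ * Real.exp (μ*x)) x := by
  exact ((Real.hasDerivAt_exp (μ*x)).comp x ((hasDerivAt_id x).const_mul μ)).congr_deriv (by simp only [id, mul_one]; ring)

lemma constIoi {g : ℝ → ℝ} (h : ∀ x ∈ Set.Ioi (0:ℝ), HasDerivAt g 0 x) {x y : ℝ}
    (hx : 0 < x) (hy : 0 < y) : g x = g y := by
  refine (convex_Ioi (0:ℝ)).is_const_of_fderivWithin_eq_zero
    (fun z hz => (h z hz).differentiableAt.differentiableWithinAt) (fun z hz => ?_) hx hy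
  rw [fderivWithin_of_isOpen isOpen_Ioi hz]
  ext
  simp [fderiv_eq_deriv_mul, (h z hz).deriv]

lemma half (μ a c l : ℝ) (hμ : 0 < μ) (hμ2 : μ^2 = l + a^2) (ha : 0 ≤ a) (hl : 0 < l)
    (W W' W'' : ℝ → ℝ) (M : ℝ) (hM : ∀ x, |W x| ≤ M)
    (hWcont : Continuous W)
    (hW' : ∀ x ∈ Set.Ioi (0:ℝ), HasDerivAt W (W' x) x)
    (hW'' : ∀ x ∈ Set.Ioi (0:ℝ), HasDerivAt W' (W'' x) x)
    (hode : ∀ x ∈ Set.Ioi (0:ℝ), -W'' x + (l + a^2) * W x = -c * Real.exp (-a * x))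
    (dp : ℝ) (hdp : HasDerivWithinAt W dp (Set.Ici 0) 0) :
    dp = -μ * (W 0 + c / l) + c * a / l := by
  have hl0 : l ≠ 0 := ne_of_gt hl
  have hμ0 : μ ≠ 0 := ne_of_gt hμ
  set V : ℝ → ℝ := fun x => W x + (c/l) * Real.exp (-a*x) with hVdef
  set V' : ℝ → ℝ := fun x => W' x - (c*a/l) * Real.exp (-a*x) with hV'def
  have hV' : ∀ x ∈ Set.Ioi (0:ℝ), HasDerivAt V (V' x) x := by
    intro x hx
    have := (hW' x hx).add ((expDeriv (-a) x).const_mul (c/l))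
    refine this.congr_deriv ?_
    simp only [hV'def]; ring
  have key : ∀ x ∈ Set.Ioi (0:ℝ),
      W'' x + (c*a^2/l) * Real.exp (-a*x) = μ^2 * V x := by
    intro x hx
    have h1 : W'' x = (l+a^2)*W x + c*Real.exp (-a*x) := by linarith [hode x hx]
    rw [h1, hμ2]
    simp only [hVdef]
    field_simp
    ring
  set g : ℝ → ℝ := fun x => (V' x + μ * V x) * Real.exp (-μ*x) with hgdef
  have hg : ∀ x ∈ Set.Ioi (0:ℝ), HasDerivAt g 0 x := by
    intro x hx
    have hsum : HasDerivAt (fun y => V' y + μ * V y) (μ^2 * V x + μ * V' x) x := by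
      have hdV' : HasDerivAt V' (μ^2 * V x - μ * 0) x := by
        have := (hW'' x hx).sub ((expDeriv (-a) x).const_mul (c*a/l))
        refine this.congr_deriv ?_
        linear_combination (key x hx)
      have := hdV'.add ((hV' x hx).const_mul μ)
      refine this.congr_deriv ?_
      ring
    have := hsum.mul (expDeriv (-μ) x)
    refine this.congr_deriv ?_
    ring
  set K : ℝ := g 1 with hKdef
  have hVode : ∀ x ∈ Set.Ioi (0:ℝ), V' x + μ * V x = K * Real.exp (μ*x) := by
    intro x hx
    have h := constIoi hg hx one_pos
    have hinv : Real.exp (-μ*x) * Real.exp (μ*x) = 1 := by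
      rw [← Real.exp_add]; simp
    have : (V' x + μ * V x) * Real.exp (-μ*x) * Real.exp (μ*x) = K * Real.exp (μ*x) := by
      rw [hgdef] at h; simp only at h; rw [h]
    calc V' x + μ * V x = (V' x + μ * V x) * (Real.exp (-μ*x) * Real.exp (μ*x)) := by
          rw [hinv]; ring
      _ = K * Real.exp (μ*x) := by rw [← mul_assoc]; exact this
  set hfun : ℝ → ℝ := fun x => V x * Real.exp (μ*x) - K/(2*μ) * Real.exp (2*μ*x) with hhdef
  have hexp2 : ∀ x : ℝ, Real.exp (2*μ*x) = Real.exp (μ*x) * Real.exp (μ*x) := by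
    intro x; rw [← Real.exp_add]; ring_nf
  have hK2 : K/(2*μ) * (2*μ) = K := by field_simp
  have hh : ∀ x ∈ Set.Ioi (0:ℝ), HasDerivAt hfun 0 x := by
    intro x hx
    have := ((hV' x hx).mul (expDeriv μ x)).sub ((expDeriv (2*μ) x).const_mul (K/(2*μ)))
    refine this.congr_deriv ?_
    have h1 := hVode x hx
    rw [hexp2 x]
    linear_combination (Real.exp (μ*x)) * h1 - (Real.exp (μ*x) * Real.exp (μ*x)) * hK2
  set C : ℝ := V 1 * Real.exp (μ*1) - K/(2*μ) * Real.exp (2*μ*1) with hCdef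
  have hVform : ∀ x ∈ Set.Ioi (0:ℝ),
      V x = C * Real.exp (-μ*x) + K/(2*μ) * Real.exp (μ*x) := by
    intro x hx
    have h := constIoi hh hx one_pos
    rw [hhdef] at h; simp only at h
    rw [← hCdef] at h
    have hne : Real.exp (μ*x) ≠ 0 := Real.exp_ne_zero _
    have hinv : Real.exp (-μ*x) * Real.exp (μ*x) = 1 := by rw [← Real.exp_add]; simp
    have hz : (V x - (C * Real.exp (-μ*x) + K/(2*μ) * Real.exp (μ*x))) * Real.exp (μ*x) = 0 := by
      linear_combination h - C * hinv + (K/(2*μ)) * (hexp2 x)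
    rcases mul_eq_zero.mp hz with h3 | h3
    · linarith [h3]
    · exact absurd h3 hne
  -- K = 0 via boundedness
  have hK0 : K = 0 := by
    by_contra hK
    have hKm : (0:ℝ) < |K/(2*μ)| := abs_pos.mpr (div_ne_zero hK (by positivity))
    have hB : ∀ x ∈ Set.Ioi (0:ℝ), |K/(2*μ)| * Real.exp (μ*x) ≤ M + |c|/l + |C| := by
      intro x hx
      have hx0 : (0:ℝ) ≤ x := le_of_lt hx
      have he : Real.exp (-a*x) ≤ 1 := Real.exp_le_one_iff.mpr (by nlinarith)
      have he' : Real.exp (-μ*x) ≤ 1 := Real.exp_le_one_iff.mpr (by nlinarith)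
      have hVb : |V x| ≤ M + |c|/l := by
        have : |V x| ≤ |W x| + |c/l * Real.exp (-a*x)| := abs_add_le _ _
        have h2 : |c/l * Real.exp (-a*x)| ≤ |c|/l := by
          rw [abs_mul, abs_div, abs_of_pos hl, abs_of_pos (Real.exp_pos _)]
          have : |c|/l * Real.exp (-a*x) ≤ |c|/l * 1 := by
            apply mul_le_mul_of_nonneg_left he (by positivity)
          linarith
        calc |V x| ≤ |W x| + |c/l * Real.exp (-a*x)| := abs_add_le _ _
          _ ≤ M + |c|/l := add_le_add (hM x) h2
      have hform := hVform x hx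
      have h3 : |K/(2*μ) * Real.exp (μ*x)| ≤ |V x| + |C * Real.exp (-μ*x)| := by
        have : K/(2*μ) * Real.exp (μ*x) = V x - C * Real.exp (-μ*x) := by linarith
        rw [this]
        exact abs_sub _ _
      have h4 : |C * Real.exp (-μ*x)| ≤ |C| := by
        rw [abs_mul, abs_of_pos (Real.exp_pos _)]
        nlinarith [abs_nonneg C, Real.exp_pos (-μ*x)]
      rw [abs_mul, abs_of_pos (Real.exp_pos (μ*x))] at h3
      linarith
    have hTend : Filter.Tendsto (fun x : ℝ => |K/(2*μ)| * Real.exp (μ*x))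
        Filter.atTop Filter.atTop := by
      have h1 : Filter.Tendsto (fun x : ℝ => μ*x) Filter.atTop Filter.atTop :=
        Filter.tendsto_id.const_mul_atTop hμ
      exact (Real.tendsto_exp_atTop.comp h1).const_mul_atTop hKm
    obtain ⟨x, hx1, hx2⟩ :=
      ((hTend.eventually_gt_atTop (M + |c|/l + |C|)).and (Filter.eventually_gt_atTop 0)).exists
    exact absurd (hB x hx2) (not_le.mpr hx1)
  -- extend V = C e^{-mu x} to Ici 0 by continuity
  have hcontV : Continuous V := by
    apply hWcont.add
    exact continuous_const.mul (Real.continuous_exp.comp (continuous_const.mul continuous_id))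
  have hEq : Set.EqOn V (fun x => C * Real.exp (-μ*x)) (Set.Ici 0) := by
    have hEqIoi : Set.EqOn V (fun x => C * Real.exp (-μ*x)) (Set.Ioi 0) := by
      intro x hx
      have := hVform x hx
      rw [hK0] at this
      simpa using this
    have := hEqIoi.closure hcontV
      (continuous_const.mul (Real.continuous_exp.comp (continuous_const.mul continuous_id)))
    rwa [closure_Ioi] at this
  -- the one-sided derivative
  have hfd : HasDerivAt (fun x => C * Real.exp (-μ*x) - (c/l) * Real.exp (-a*x))
      (-μ * C + c*a/l) 0 := by
    have := ((expDeriv (-μ) 0).const_mul C).sub ((expDeriv (-a) 0).const_mul (c/l))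
    refine this.congr_deriv ?_
    simp only [mul_zero, Real.exp_zero]; ring
  have hWdw : HasDerivWithinAt W (-μ * C + c*a/l) (Set.Ici 0) 0 := by
    apply (hfd.hasDerivWithinAt).congr
    · intro y hy
      have := hEq hy
      simp only [hVdef] at this
      linarith
    · have := hEq (self_mem_Ici)
      simp only [hVdef] at this
      linarith
  have hdpval : dp = -μ * C + c*a/l :=
    ((uniqueDiffOn_Ici (0:ℝ)) 0 self_mem_Ici).eq_deriv _ hdp hWdw
  have hC0 : C = W 0 + c/l := by
    have := hEq (self_mem_Ici)
    simp only [hVdef] at this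
    simp at this
    linarith
  rw [hdpval, hC0]


/-- For the Laplace-transformed transmission problem: if `W` is
bounded, continuous, twice continuously differentiable away from `0`, solves
`−W'' + (λ + a²)W = −c e^{−a|x|}` for `x ≠ 0`, and its one-sided derivatives at `0`
jump by `2b(W(0) + 1/λ)`, then
`W(0) = (ca + bc − b)/(λ(√(λ + a²) + b)) − c/λ`. -/
theorem stmt19 (a b l c : ℝ) (ha : 0 ≤ a) (hb : 0 < b) (hl : 0 < l)
    (W W' W'' : ℝ → ℝ)
    (hWbdd : ∃ M, ∀ x : ℝ, |W x| ≤ M)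
    (hWcont : Continuous W)
    (hW' : ∀ x : ℝ, x ≠ 0 → HasDerivAt W (W' x) x)
    (hW'' : ∀ x : ℝ, x ≠ 0 → HasDerivAt W' (W'' x) x)
    (hW''cont : ContinuousOn W'' {x : ℝ | x ≠ 0})
    (hode : ∀ x : ℝ, x ≠ 0 →
      -W'' x + (l + a ^ 2) * W x = -c * Real.exp (-a * |x|))
    (hjump : ∃ dp dm : ℝ, HasDerivWithinAt W dp (Set.Ici 0) 0 ∧
      HasDerivWithinAt W dm (Set.Iic 0) 0 ∧ dp - dm = 2 * b * (W 0 + 1 / l)) :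
    W 0 = (c * a + b * c - b) / (l * (Real.sqrt (l + a ^ 2) + b)) - c / l := by
  obtain ⟨M, hM⟩ := hWbdd
  obtain ⟨dp, dm, hdp, hdm, hj⟩ := hjump
  set μ : ℝ := Real.sqrt (l + a^2) with hμdef
  have hla : (0:ℝ) < l + a^2 := by positivity
  have hμ : 0 < μ := Real.sqrt_pos.mpr hla
  have hμ2 : μ^2 = l + a^2 := Real.sq_sqrt (le_of_lt hla)
  -- right half-line
  have h1 : dp = -μ * (W 0 + c / l) + c * a / l := by
    apply half μ a c l hμ hμ2 ha hl W W' W'' M hM hWcont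
      (fun x hx => hW' x (ne_of_gt hx)) (fun x hx => hW'' x (ne_of_gt hx))
      (fun x hx => by simpa [abs_of_pos (show (0:ℝ) < x from hx)] using hode x (ne_of_gt hx)) dp hdp
  -- left half-line via reflection
  have h2 : -dm = -μ * (W (-0) + c / l) + c * a / l := by
    have hneg : ∀ x : ℝ, x ∈ Set.Ioi (0:ℝ) → (-x ≠ 0) := fun x hx => by
      simp only [Set.mem_Ioi] at hx; intro h; nlinarith [neg_eq_zero.mp h]
    apply half μ a c l hμ hμ2 ha hl (fun x => W (-x)) (fun x => -W' (-x))
      (fun x => W'' (-x)) M (fun x => hM (-x)) (hWcont.comp continuous_neg)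
    · intro x hx
      have := (hW' (-x) (hneg x hx)).comp x (hasDerivAt_neg x)
      exact this.congr_deriv (by ring)
    · intro x hx
      have := ((hW'' (-x) (hneg x hx)).comp x (hasDerivAt_neg x)).neg
      exact this.congr_deriv (by ring)
    · intro x hx
      have hx0 : (0:ℝ) < x := hx
      have := hode (-x) (hneg x hx)
      simpa [abs_of_pos hx0] using this
    · -- HasDerivWithinAt (fun x => W (-x)) (-dm) (Ici 0) 0
      have hnegd : HasDerivWithinAt (fun y : ℝ => -y) (-1) (Set.Ici 0) 0 :=
        (hasDerivAt_neg 0).hasDerivWithinAt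
      have hmaps : Set.MapsTo (fun y : ℝ => -y) (Set.Ici 0) (Set.Iic 0) :=
        fun y hy => by simp only [Set.mem_Iic]; simp only [Set.mem_Ici] at hy; linarith
      have hdm' : HasDerivWithinAt W dm (Set.Iic 0) (-(0:ℝ)) := by simpa using hdm
      have := hdm'.comp 0 hnegd hmaps
      exact this.congr_deriv (by ring)
  rw [neg_zero] at h2
  -- combine
  have hlb : (0:ℝ) < l * (μ + b) := by positivity
  rw [eq_sub_iff_add_eq, eq_div_iff (ne_of_gt hlb)]
  have hdm2 : dm = μ * (W 0 + c / l) - c * a / l := by linarith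
  have hc : c / l * l = c := div_mul_cancel₀ c (ne_of_gt hl)
  have hc2 : c * a / l * l = c * a := div_mul_cancel₀ _ (ne_of_gt hl)
  have hc3 : (1:ℝ) / l * l = 1 := div_mul_cancel₀ _ (ne_of_gt hl)
  nlinarith [hj, h1, hdm2, hc, hc2, hc3]
end
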